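/- Expected summability of squared successive differences for SSI-HG under the weak MVI assumption (equations (thm1_5)–(thm1_6) in the proof of Theorem 1). Suppose (w*, δ*) is a solution of the weak MVI with parameter ρ > 0, let θ = 1, let σ, τ > 0 satisfy κ := max{L12·(στn)^{1/2}, L11·σ} < min{1/3 − ρ(σ^{−1} + 4L11²σ), 1 − ρ(τ^{−1} + 12nL12²τ)}. Let (w^k, δ^k) be an SSI-HG trajectory with these parameters and write E[·] for the average over uniformly random i.i.d. index histories. Then for every K ≥ 1: ((1 − 3κ − 3ρ(σ^{−1} + 4L11²σ))/(2σ)) ∑_{k=0}^{K−1} E[‖w^{k+1} − w^k‖²] + (n(1 − κ − ρ(τ^{−1} + 12nL12²τ))/(2τ)) ∑_{k=0}^{K−1} E[‖δ^{k+1} − δ^k‖²] ≤ (1/(2σ))‖w* − w^0‖² + (n/(2τ))‖δ* − δ^0‖². In particular, (1/K)∑_{k=0}^{K−1} E[‖w^{k+1} − w^k‖²] = O(1/K) and (1/K)∑_{k=0}^{K−1} E[‖δ^{k+1} − δ^k‖²] = O(1/K). -/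

import Mathlib

open scoped RealInnerProductSpace

/-- `γ` is a subgradient of `h` at `x`. -/
def IsSubgradient {X : Type*} [NormedAddCommGroup X] [InnerProductSpace ℝ X]
    (h : X → ℝ) (x γ : X) : Prop :=
  ∀ u, h u ≥ h x + ⟪γ, u - x⟫

/-- Given the initial point `w0` and the family `W` (where `W s` is the iterate
`w^{|s|+1}` produced after the (reversed) index history `s`), `wat w0 W s` is the iterate
`w^{|s|}` at the beginning of the step with (reversed) history `s`; it depends only on
the indices drawn strictly before the last one.  In particular `wat w0 W [] = w0 = w^0`,
which also encodes the convention `w^{-1} = w^0` via `List.tail [] = []`. -/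
def wat {n : ℕ} {E : Type*} (w0 : E) (W : List (Fin n) → E) : List (Fin n) → E
  | [] => w0
  | _ :: t => W t



set_option maxHeartbeats 8000000

open scoped RealInnerProductSpace

section SSIAux

lemma ssi_three_point {E : Type*} [NormedAddCommGroup E] [InnerProductSpace ℝ E] (x y z : E) :
    ⟪x - y, x - z⟫ = (‖x - y‖^2 + ‖x - z‖^2 - ‖y - z‖^2)/2 := by
  have h : ‖(x - z) - (x - y)‖^2 = ‖x - z‖^2 - 2 * ⟪x - z, x - y⟫ + ‖x - y‖^2 :=
    norm_sub_sq_real _ _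
  have h2 : (x - z) - (x - y) = y - z := by abel
  have h3 : ⟪x - z, x - y⟫ = ⟪x - y, x - z⟫ := real_inner_comm _ _
  rw [h2, h3] at h
  linarith

lemma ssi_sum_ofFn_succ {n : ℕ} {M : Type*} [AddCommMonoid M] (k : ℕ) (F : List (Fin n) → M) :
    ∑ s : Fin (k+1) → Fin n, F (List.ofFn s)
      = ∑ i : Fin n, ∑ s : Fin k → Fin n, F (i :: List.ofFn s) := by
  rw [← Fintype.sum_prod_type']
  apply Fintype.sum_equiv (Fin.consEquiv fun _ => Fin n).symm
  intro p
  simp only [Fin.consEquiv, List.ofFn_succ, Equiv.coe_fn_symm_mk]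
  rfl

/-- finite average over histories of length `k`. -/
noncomputable def ssiEx (n k : ℕ) (F : List (Fin n) → ℝ) : ℝ :=
  ((n:ℝ)^k)⁻¹ * ∑ s : Fin k → Fin n, F (List.ofFn s)

lemma ssiEx_zero (n : ℕ) (F : List (Fin n) → ℝ) : ssiEx n 0 F = F [] := by
  simp [ssiEx]

lemma ssiEx_succ {n : ℕ} (hn : 0 < n) (k : ℕ) (F : List (Fin n) → ℝ) :
    ssiEx n (k+1) F = ssiEx n k (fun s => (n:ℝ)⁻¹ * ∑ i, F (i :: s)) := by
  have hn0 : (n:ℝ) ≠ 0 := by positivity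
  unfold ssiEx
  rw [ssi_sum_ofFn_succ]
  rw [Finset.sum_comm]
  simp only []
  rw [← Finset.mul_sum, pow_succ]
  field_simp

lemma ssiEx_add {n k : ℕ} (F G : List (Fin n) → ℝ) :
    ssiEx n k (fun s => F s + G s) = ssiEx n k F + ssiEx n k G := by
  unfold ssiEx
  rw [← mul_add, ← Finset.sum_add_distrib]

lemma ssiEx_mul {n k : ℕ} (a : ℝ) (F : List (Fin n) → ℝ) :
    ssiEx n k (fun s => a * F s) = a * ssiEx n k F := by
  unfold ssiEx
  rw [← Finset.mul_sum]
  ring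

lemma ssiEx_sub {n k : ℕ} (F G : List (Fin n) → ℝ) :
    ssiEx n k (fun s => F s - G s) = ssiEx n k F - ssiEx n k G := by
  unfold ssiEx
  rw [← mul_sub, ← Finset.sum_sub_distrib]

lemma ssiEx_neg {n k : ℕ} (F : List (Fin n) → ℝ) :
    ssiEx n k (fun s => -(F s)) = -(ssiEx n k F) := by
  unfold ssiEx
  rw [← mul_neg, ← Finset.sum_neg_distrib]

lemma ssiEx_congr {n k : ℕ} {F G : List (Fin n) → ℝ} (h : ∀ s, F s = G s) :
    ssiEx n k F = ssiEx n k G := by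
  unfold ssiEx
  exact congrArg _ (Finset.sum_congr rfl fun s _ => h _)

lemma ssiEx_le {n k : ℕ} {F G : List (Fin n) → ℝ} (h : ∀ s, F s ≤ G s) :
    ssiEx n k F ≤ ssiEx n k G := by
  unfold ssiEx
  apply mul_le_mul_of_nonneg_left (Finset.sum_le_sum fun s _ => h _) (by positivity)

lemma ssiEx_nonneg {n k : ℕ} {F : List (Fin n) → ℝ} (h : ∀ s, 0 ≤ F s) :
    0 ≤ ssiEx n k F := by
  unfold ssiEx
  apply mul_nonneg (by positivity) (Finset.sum_nonneg fun s _ => h _)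

lemma ssi_pil_sub_sq {n : ℕ} {Fd : Fin n → Type*} [∀ i, NormedAddCommGroup (Fd i)]
    [∀ i, InnerProductSpace ℝ (Fd i)] (x y : PiLp 2 Fd) :
    ‖x - y‖^2 = ∑ i, ‖x i - y i‖^2 := by
  rw [PiLp.norm_sq_eq_of_L2]
  rfl

lemma ssi_young {c X Y : ℝ} (a b : ℝ) (hc : 0 ≤ c) (hX : 0 ≤ X) (hY : 0 ≤ Y)
    (h : c^2 ≤ X*Y) (ha : 0 ≤ a) (hb : 0 ≤ b) : c*(a*b) ≤ X/2*a^2 + Y/2*b^2 := by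
  rcases eq_or_lt_of_le hX with hX0 | hX0
  · have hc0 : c = 0 := by nlinarith
    rw [hc0, ← hX0]; nlinarith
  · nlinarith [sq_nonneg (X*a - c*b), mul_le_mul_of_nonneg_right h (sq_nonneg b)]

lemma ssi_sq5 {v b1 b2 b3 b4 b5 : ℝ} (hv : 0 ≤ v) (h : v ≤ b1+b2+b3+b4+b5)
    (h1 : 0 ≤ b1) (h2 : 0 ≤ b2) (h3 : 0 ≤ b3) (h4 : 0 ≤ b4) (h5 : 0 ≤ b5) :
    v^2 ≤ 3*b1^2 + 6*(b2^2+b3^2+b4^2+b5^2) := by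
  have hvv : v^2 ≤ (b1+b2+b3+b4+b5)^2 := by nlinarith
  nlinarith [sq_nonneg (b1-2*b2), sq_nonneg (b1-2*b3), sq_nonneg (b1-2*b4), sq_nonneg (b1-2*b5),
    sq_nonneg (b2-b3), sq_nonneg (b2-b4), sq_nonneg (b2-b5), sq_nonneg (b3-b4),
    sq_nonneg (b3-b5), sq_nonneg (b4-b5)]

lemma ssi_sq2 {v x y : ℝ} (hv : 0 ≤ v) (h : v ≤ x + y) (hx : 0 ≤ x) (hy : 0 ≤ y) :
    v^2 ≤ 3*x^2 + 3/2*y^2 := by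
  nlinarith [sq_nonneg (2*x - y)]

lemma ssi_sum_update {n : ℕ} (f g : Fin n → ℝ) (i : Fin n) (h : ∀ j, j ≠ i → f j = g j) :
    ∑ j, f j = (∑ j, g j) - g i + f i := by
  rw [← Finset.add_sum_erase _ f (Finset.mem_univ i),
    ← Finset.add_sum_erase _ g (Finset.mem_univ i)]
  have he : ∑ j ∈ Finset.univ.erase i, f j = ∑ j ∈ Finset.univ.erase i, g j :=
    Finset.sum_congr rfl fun j hj => h j (Finset.ne_of_mem_erase hj)
  rw [he]; ring

end SSIAux

/-- Expected summability of squared successive differences for SSI-HG under the weak MVI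
assumption (equations (thm1_5)–(thm1_6) in the proof of Theorem 1).
Index histories are encoded as lists in reverse chronological order (most recent index
first); `W s = w^{|s|+1}(s)`, `D s = δ^{|s|}(s)` (so `D [] = δ^0`), and the expectation
over the uniformly random i.i.d. index sequence is the finite average over all
histories. -/
theorem ssihg_expected_summability_squared_differences_weak_mvi
    {n : ℕ} (hn : 1 ≤ n)
    {E : Type*} [NormedAddCommGroup E] [InnerProductSpace ℝ E] [FiniteDimensional ℝ E]
    {Fd : Fin n → Type*} [∀ i, NormedAddCommGroup (Fd i)]
    [∀ i, InnerProductSpace ℝ (Fd i)] [∀ i, FiniteDimensional ℝ (Fd i)]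
    (φ : ∀ i, E → Fd i → ℝ)
    (gw : ∀ i, E → Fd i → E) (gd : ∀ i, E → Fd i → Fd i)
    (hgw : ∀ (i : Fin n) (w : E) (d : Fd i),
      HasGradientAt (fun w' => φ i w' d) (gw i w d) w)
    (hgd : ∀ (i : Fin n) (w : E) (d : Fd i),
      HasGradientAt (fun d' => φ i w d') (gd i w d) d)
    (Gw : E → PiLp 2 Fd → E)
    (hGw : ∀ w δ, Gw w δ = ∑ i, gw i w (δ i))
    (Gd : E → PiLp 2 Fd → PiLp 2 Fd)
    (hGd : ∀ w δ i, Gd w δ i = gd i w (δ i))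
    (L11 L12 L22 : ℝ) (hL11 : 0 < L11) (hL12 : 0 < L12) (hL22 : 0 < L22)
    (hLww : ∀ (w w' : E) (δ : PiLp 2 Fd), ‖Gw w δ - Gw w' δ‖ ≤ L11 * ‖w - w'‖)
    (hLdw : ∀ (w w' : E) (δ : PiLp 2 Fd), ‖Gd w δ - Gd w' δ‖ ≤ L12 * ‖w - w'‖)
    (hLwd : ∀ (w : E) (δ δ' : PiLp 2 Fd), ‖Gw w δ - Gw w δ'‖ ≤ L12 * ‖δ - δ'‖)
    (hLdd : ∀ (w : E) (δ δ' : PiLp 2 Fd), ‖Gd w δ - Gd w δ'‖ ≤ L22 * ‖δ - δ'‖)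
    (f : E → ℝ) (hf : ConvexOn ℝ Set.univ f)
    (gi : ∀ i, Fd i → ℝ) (hgi : ∀ i, ConvexOn ℝ Set.univ (gi i))
    (wstar : E) (δstar : PiLp 2 Fd) (ρ : ℝ) (hρ : 0 < ρ)
    (hMVI : ∀ (w : E) (δ : PiLp 2 Fd) (γf : E) (γg : PiLp 2 Fd),
      IsSubgradient f w γf → (∀ i, IsSubgradient (gi i) (δ i) (γg i)) →
      ⟪γf + Gw w δ, w - wstar⟫ + ⟪γg - Gd w δ, δ - δstar⟫ ≥
        -(ρ / 2) * (‖γf + Gw w δ‖ ^ 2 + ‖γg - Gd w δ‖ ^ 2))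
    (σ τ θ : ℝ) (hσ : 0 < σ) (hτ : 0 < τ) (hθ : θ = 1)
    (κ : ℝ) (hκ : κ = max (L12 * Real.sqrt (σ * τ * (n : ℝ))) (L11 * σ))
    (hstep : κ <
      min (1 / 3 - ρ * (σ⁻¹ + 4 * L11 ^ 2 * σ))
        (1 - ρ * (τ⁻¹ + 12 * (n : ℝ) * L12 ^ 2 * τ)))
    (w0 : E) (W : List (Fin n) → E) (D : List (Fin n) → PiLp 2 Fd)
    (hupw : ∀ s : List (Fin n), ∃ γf : E, IsSubgradient f (W s) γf ∧
      (0 : E) = γf + σ⁻¹ • (W s - wat w0 W s) + Gw (wat w0 W s) (D s)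
        + θ • (Gw (wat w0 W s) (D s)
          - (Gw (wat w0 W s.tail) (D s.tail)
            - ((n : ℝ) - 1) • (Gw (wat w0 W s) (D s) - Gw (wat w0 W s) (D s.tail)))))
    (hupd : ∀ (s : List (Fin n)) (i : Fin n),
      (∀ j, j ≠ i → D (i :: s) j = D s j) ∧
      ∃ γ : Fd i, IsSubgradient (gi i) (D (i :: s) i) γ ∧
        (0 : Fd i) = γ + τ⁻¹ • (D (i :: s) i - D s i) - gd i (W s) (D (i :: s) i)) :
    ∀ K : ℕ, 1 ≤ K →
      ((1 - 3 * κ - 3 * ρ * (σ⁻¹ + 4 * L11 ^ 2 * σ)) / (2 * σ)) *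
          (∑ k ∈ Finset.range K, ((n : ℝ) ^ k)⁻¹ *
            ∑ s : Fin k → Fin n, ‖W (List.ofFn s) - wat w0 W (List.ofFn s)‖ ^ 2)
        + ((n : ℝ) * (1 - κ - ρ * (τ⁻¹ + 12 * (n : ℝ) * L12 ^ 2 * τ)) / (2 * τ)) *
          (∑ k ∈ Finset.range K, ((n : ℝ) ^ (k + 1))⁻¹ *
            ∑ s : Fin (k + 1) → Fin n,
              ‖D (List.ofFn s) - D (List.ofFn s).tail‖ ^ 2)
      ≤ (1 / (2 * σ)) * ‖wstar - w0‖ ^ 2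
          + ((n : ℝ) / (2 * τ)) * ‖δstar - D []‖ ^ 2 := by
  subst hθ
  intro K hK
  classical
  have hn0 : (0:ℝ) < (n:ℝ) := by exact_mod_cast hn
  have hn1 : (1:ℝ) ≤ (n:ℝ) := by exact_mod_cast hn
  have hnne : (n:ℝ) ≠ 0 := ne_of_gt hn0
  have hκL11 : L11 * σ ≤ κ := hκ ▸ le_max_right _ _
  have hκpos : 0 < κ := lt_of_lt_of_le (by positivity) hκL11
  have hκ13 : κ ≤ 1/3 := by
    have h1 := lt_of_lt_of_le hstep (min_le_left _ _)
    have h2 : 0 < ρ * (σ⁻¹ + 4 * L11 ^ 2 * σ) := by positivity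
    linarith
  have hκsq : L12^2 * (σ*τ*(n:ℝ)) ≤ κ^2 := by
    have h1 : L12 * Real.sqrt (σ*τ*(n:ℝ)) ≤ κ := hκ ▸ le_max_left _ _
    have h2 : 0 ≤ L12 * Real.sqrt (σ*τ*(n:ℝ)) := by positivity
    have h3 := mul_self_le_mul_self h2 h1
    have h4 : Real.sqrt (σ*τ*(n:ℝ)) * Real.sqrt (σ*τ*(n:ℝ)) = σ*τ*(n:ℝ) :=
      Real.mul_self_sqrt (by positivity)
    nlinarith
  -- extract the subgradients and optimality relations
  choose γf hγfs hγfe using hupw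
  have hDkeep : ∀ s (i : Fin n) j, j ≠ i → D (i :: s) j = D s j := fun s i => (hupd s i).1
  choose γg hγgs hγge using fun s (i : Fin n) => (hupd s i).2
  -- local definitions
  set dh : List (Fin n) → PiLp 2 Fd := fun s => WithLp.toLp 2 (fun i => D (i :: s) i) with hdh
  set gv : List (Fin n) → PiLp 2 Fd := fun s => WithLp.toLp 2 (fun i => γg s i) with hgv
  set cδ : List (Fin n) → E :=
    fun s => (n:ℝ) • (Gw (wat w0 W s) (D s) - Gw (wat w0 W s) (D s.tail)) with hcd
  set cw : List (Fin n) → E :=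
    fun s => Gw (wat w0 W s) (D s.tail) - Gw (wat w0 W s.tail) (D s.tail) with hcw
  set cv : List (Fin n) → E := fun s => cδ s + cw s with hcv
  set eb : List (Fin n) → E :=
    fun s => Gw (W s) (dh s) - Gw (wat w0 W s) (D s) - cv s with heb
  set aw : List (Fin n) → ℝ := fun s => ‖W s - wat w0 W s‖^2 with haw
  set ad : List (Fin n) → ℝ := fun s => ‖D s - D s.tail‖^2 with had
  set adh : List (Fin n) → ℝ := fun s => ‖dh s - D s‖^2 with hadh
  set pw : List (Fin n) → ℝ := fun s => ‖wat w0 W s - wat w0 W s.tail‖^2 with hpw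
  set fw : List (Fin n) → ℝ := fun s => ‖wstar - wat w0 W s‖^2 with hfw
  set fd : List (Fin n) → ℝ := fun s => ‖δstar - D s‖^2 with hfd
  set cx : List (Fin n) → ℝ := fun s => ⟪cv s, wat w0 W s - wstar⟫ with hcx
  set bad : List (Fin n) → ℝ := fun s =>
    ((n:ℝ)*κ/τ)/2 * ad s + (κ/σ) * aw s + (κ/σ)/2 * pw s
      + ρ/2*(3*(σ⁻¹)^2*aw s + 6*(L12^2*adh s + L11^2*aw s + (n:ℝ)^2*L12^2*ad s + L11^2*pw s)
          + (τ⁻¹)^2*adh s) with hbad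
  -- trivial values at the root
  have hwat_nil : wat w0 W ([] : List (Fin n)) = w0 := rfl
  have hwat_cons : ∀ (i : Fin n) s, wat w0 W (i :: s) = W s := fun _ _ => rfl
  have hcv0 : cv ([] : List (Fin n)) = 0 := by
    simp [hcv, hcd, hcw]
  -- step 1 : the prox relation for the w-update
  have hγfEq : ∀ s, γf s + Gw (W s) (dh s)
      = eb s - σ⁻¹ • (W s - wat w0 W s) := by
    intro s
    have h := hγfe s
    simp only [heb, hcv, hcd, hcw]
    linear_combination (norm := module) -h
  -- step 2 : the prox relation for the δ-update
  have hγgEq : ∀ s, gv s - Gd (W s) (dh s)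
      = -(τ⁻¹ • (dh s - D s)) := by
    intro s
    ext i
    have h := hγge s i
    have hGdi : Gd (W s) (dh s) i = gd i (W s) (D (i :: s) i) := hGd (W s) (dh s) i
    show γg s i - Gd (W s) (dh s) i = -(τ⁻¹ • (D (i :: s) i - D s i))
    rw [hGdi]
    linear_combination (norm := module) -h
  -- step 3 : conditional expectation identity for the hybrid-gradient correction
  have hGwsum : ∀ s, ∑ i : Fin n, Gw (W s) (D (i :: s))
      = Gw (W s) (dh s) + ((n:ℝ)-1) • Gw (W s) (D s) := by
    intro s
    simp only [hGw, hdh]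
    rw [Finset.sum_comm, Finset.smul_sum, ← Finset.sum_add_distrib]
    apply Finset.sum_congr rfl
    intro j _
    rw [← Finset.add_sum_erase _ _ (Finset.mem_univ j)]
    congr 1
    have hconst : ∀ i ∈ Finset.univ.erase j, gw j (W s) (D (i :: s) j) = gw j (W s) (D s j) :=
      fun i hi => by rw [hDkeep s i j (Finset.ne_of_mem_erase hi).symm]
    rw [Finset.sum_congr rfl hconst, Finset.sum_const,
      Finset.card_erase_of_mem (Finset.mem_univ j), Finset.card_univ, Fintype.card_fin,
      ← Nat.cast_smul_eq_nsmul ℝ, Nat.cast_sub hn, Nat.cast_one]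
  have hEb : ∀ s, eb s = (n:ℝ)⁻¹ • (∑ i, cv (i :: s)) - cv s := by
    intro s
    have h1 : ∀ i : Fin n, cv (i :: s)
        = (n:ℝ) • Gw (W s) (D (i :: s)) - ((n:ℝ)-1) • Gw (W s) (D s)
          - Gw (wat w0 W s) (D s) := by
      intro i
      simp only [hcv, hcd, hcw, hwat_cons, List.tail_cons]
      module
    have h2 : ∑ i, cv (i :: s) = (n:ℝ) • (Gw (W s) (dh s) - Gw (wat w0 W s) (D s)) := by
      rw [Finset.sum_congr rfl fun i _ => h1 i]
      rw [Finset.sum_sub_distrib, Finset.sum_sub_distrib, ← Finset.smul_sum, hGwsum s,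
        Finset.sum_const, Finset.sum_const, Finset.card_univ, Fintype.card_fin]
      simp only [← Nat.cast_smul_eq_nsmul ℝ]
      module
    rw [h2]
    simp only [heb]
    rw [smul_smul, inv_mul_cancel₀ hnne, one_smul]
  -- step 4 : the per-history MVI inequality
  have hMVIs : ∀ s, σ⁻¹ * ((aw s + ‖W s - wstar‖^2 - fw s)/2)
      + τ⁻¹ * ((adh s + ‖dh s - δstar‖^2 - fd s)/2)
      ≤ ⟪eb s, W s - wstar⟫
        + ρ/2 * (‖eb s - σ⁻¹ • (W s - wat w0 W s)‖^2 + (τ⁻¹)^2 * adh s) := by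
    intro s
    have h0 := hMVI (W s) (dh s) (γf s) (gv s) (hγfs s) (fun i => hγgs s i)
    rw [hγfEq s, hγgEq s] at h0
    have hnrm : ‖-(τ⁻¹ • (dh s - D s))‖^2 = (τ⁻¹)^2 * adh s := by
      rw [norm_neg, norm_smul, Real.norm_eq_abs, abs_of_pos (inv_pos.mpr hτ), mul_pow, hadh]
    rw [inner_sub_left, real_inner_smul_left, inner_neg_left, real_inner_smul_left, hnrm] at h0
    have h3w := ssi_three_point (W s) (wat w0 W s) wstar
    have h3d := ssi_three_point (dh s) (D s) δstar
    have e1 : ‖W s - wat w0 W s‖^2 = aw s := by rw [haw]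
    have e2 : ‖wat w0 W s - wstar‖^2 = fw s := by rw [hfw]; simp only []; rw [norm_sub_rev]
    have e3 : ‖dh s - D s‖^2 = adh s := by rw [hadh]
    have e4 : ‖D s - δstar‖^2 = fd s := by rw [hfd]; simp only []; rw [norm_sub_rev]
    rw [e1, e2] at h3w
    rw [e3, e4] at h3d
    rw [h3w, h3d] at h0
    linarith
  -- step 5 : coordinate decompositions
  have hF4 : ∀ (i : Fin n) s, fw (i :: s) = ‖W s - wstar‖^2 := by
    intro i s; simp only [hfw, hwat_cons]; rw [norm_sub_rev]
  have hF5 : ∀ (i : Fin n) s, pw (i :: s) = aw s := by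
    intro i s; simp only [hpw, haw, hwat_cons, List.tail_cons]
  have hF2 : ∀ s, ∑ i, fd (i :: s) = ((n:ℝ) - 1) * fd s + ‖dh s - δstar‖^2 := by
    intro s
    have h1 : ∀ i : Fin n, fd (i :: s)
        = fd s - ‖δstar i - D s i‖^2 + ‖δstar i - D (i :: s) i‖^2 := by
      intro i
      simp only [hfd]
      rw [ssi_pil_sub_sq, ssi_pil_sub_sq]
      have h2 := ssi_sum_update (fun j => ‖δstar j - D (i :: s) j‖^2)
        (fun j => ‖δstar j - D s j‖^2) i (fun j hj => by
          show ‖δstar j - D (i :: s) j‖^2 = ‖δstar j - D s j‖^2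
          rw [hDkeep s i j hj])
      simpa using h2
    rw [Finset.sum_congr rfl fun i _ => h1 i]
    rw [Finset.sum_add_distrib, Finset.sum_sub_distrib, Finset.sum_const, Finset.card_univ,
      Fintype.card_fin, nsmul_eq_mul]
    have h3 : ∑ i, ‖δstar i - D s i‖^2 = fd s := by
      rw [hfd]; simp only []; rw [ssi_pil_sub_sq]
    have h4 : ∑ i, ‖δstar i - D (i :: s) i‖^2 = ‖dh s - δstar‖^2 := by
      rw [ssi_pil_sub_sq]
      exact Finset.sum_congr rfl fun i _ => by rw [norm_sub_rev]
    rw [h3, h4]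
    ring
  have hF3 : ∀ s, ∑ i, ad (i :: s) = adh s := by
    intro s
    have h1 : ∀ i : Fin n, ad (i :: s) = ‖dh s i - D s i‖^2 := by
      intro i
      simp only [had, List.tail_cons]
      rw [ssi_pil_sub_sq]
      exact Finset.sum_eq_single_of_mem i (Finset.mem_univ i)
        (fun j _ hj => by rw [hDkeep s i j hj]; simp)
    rw [Finset.sum_congr rfl fun i _ => h1 i, hadh]
    simp only []
    rw [ssi_pil_sub_sq]
  -- step 6 : bounds on the correction vector
  have hcdn : ∀ s, ‖cδ s‖ ≤ (n:ℝ) * (L12 * ‖D s - D s.tail‖) := by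
    intro s
    simp only [hcd]
    rw [norm_smul, Real.norm_eq_abs, abs_of_nonneg hn0.le]
    exact mul_le_mul_of_nonneg_left (hLwd _ _ _) hn0.le
  have hcwn : ∀ s, ‖cw s‖ ≤ L11 * ‖wat w0 W s - wat w0 W s.tail‖ := by
    intro s
    simp only [hcw]
    exact hLww _ _ _
  have hcross : ∀ s, -(⟪cv s, W s - wat w0 W s⟫ : ℝ)
      ≤ ((n:ℝ)*κ/τ)/2 * ad s + (κ/σ) * aw s + (κ/σ)/2 * pw s := by
    intro s
    have h1 : -(⟪cv s, W s - wat w0 W s⟫:ℝ)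
        ≤ ‖cδ s‖ * ‖W s - wat w0 W s‖ + ‖cw s‖ * ‖W s - wat w0 W s‖ := by
      have e : cv s = cδ s + cw s := by rw [hcv]
      rw [e, inner_add_left]
      have a1 := abs_real_inner_le_norm (cδ s) (W s - wat w0 W s)
      have a2 := abs_real_inner_le_norm (cw s) (W s - wat w0 W s)
      have b1 := neg_abs_le (⟪cδ s, W s - wat w0 W s⟫:ℝ)
      have b2 := neg_abs_le (⟪cw s, W s - wat w0 W s⟫:ℝ)
      linarith
    have h2 : ‖cδ s‖ * ‖W s - wat w0 W s‖
        ≤ ((n:ℝ)*(L12*‖D s - D s.tail‖)) * ‖W s - wat w0 W s‖ :=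
      mul_le_mul_of_nonneg_right (hcdn s) (norm_nonneg _)
    have h3 : ‖cw s‖ * ‖W s - wat w0 W s‖
        ≤ (L11*‖wat w0 W s - wat w0 W s.tail‖) * ‖W s - wat w0 W s‖ :=
      mul_le_mul_of_nonneg_right (hcwn s) (norm_nonneg _)
    have hO : ((n:ℝ)*L12)^2 ≤ ((n:ℝ)*κ/τ)*(κ/σ) := by
      rw [div_mul_div_comm, le_div_iff₀ (by positivity)]
      nlinarith [mul_le_mul_of_nonneg_left hκsq hn0.le]
    have hy1 : ((n:ℝ)*L12)*(‖D s - D s.tail‖*‖W s - wat w0 W s‖)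
        ≤ ((n:ℝ)*κ/τ)/2 * ‖D s - D s.tail‖^2 + (κ/σ)/2 * ‖W s - wat w0 W s‖^2 :=
      ssi_young _ _ (by positivity) (by positivity) (by positivity) hO
        (norm_nonneg _) (norm_nonneg _)
    have hO2 : L11^2 ≤ (κ/σ)*(κ/σ) := by
      rw [div_mul_div_comm, le_div_iff₀ (by positivity)]
      nlinarith [mul_le_mul hκL11 hκL11 (by positivity) hκpos.le]
    have hy2 : L11*(‖wat w0 W s - wat w0 W s.tail‖*‖W s - wat w0 W s‖)
        ≤ (κ/σ)/2 * ‖wat w0 W s - wat w0 W s.tail‖^2 + (κ/σ)/2 * ‖W s - wat w0 W s‖^2 :=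
      ssi_young _ _ hL11.le (by positivity) (by positivity) hO2 (norm_nonneg _) (norm_nonneg _)
    have e1 : ad s = ‖D s - D s.tail‖^2 := by rw [had]
    have e2 : aw s = ‖W s - wat w0 W s‖^2 := by rw [haw]
    have e3 : pw s = ‖wat w0 W s - wat w0 W s.tail‖^2 := by rw [hpw]
    rw [e1, e2, e3]
    nlinarith [h1, h2, h3, hy1, hy2]
  have hF8 : ∀ s, ‖eb s - σ⁻¹ • (W s - wat w0 W s)‖^2
      ≤ 3*(σ⁻¹)^2*aw s + 6*(L12^2*adh s + L11^2*aw s + (n:ℝ)^2*L12^2*ad s + L11^2*pw s) := by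
    intro s
    have hdc : eb s - σ⁻¹ • (W s - wat w0 W s)
        = -(σ⁻¹ • (W s - wat w0 W s)) + (Gw (W s) (dh s) - Gw (W s) (D s))
          + (Gw (W s) (D s) - Gw (wat w0 W s) (D s)) + (-(cδ s)) + (-(cw s)) := by
      simp only [heb, hcv]
      module
    have n1 : ‖Gw (W s) (dh s) - Gw (W s) (D s)‖ ≤ L12*‖dh s - D s‖ := hLwd _ _ _
    have n2 : ‖Gw (W s) (D s) - Gw (wat w0 W s) (D s)‖ ≤ L11*‖W s - wat w0 W s‖ := hLww _ _ _
    have n3 : ‖-(cδ s)‖ ≤ (n:ℝ)*(L12*‖D s - D s.tail‖) := by rw [norm_neg]; exact hcdn s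
    have n4 : ‖-(cw s)‖ ≤ L11*‖wat w0 W s - wat w0 W s.tail‖ := by rw [norm_neg]; exact hcwn s
    have n5 : ‖-(σ⁻¹ • (W s - wat w0 W s))‖ = σ⁻¹*‖W s - wat w0 W s‖ := by
      rw [norm_neg, norm_smul, Real.norm_eq_abs, abs_of_pos (inv_pos.mpr hσ)]
    have htri : ‖eb s - σ⁻¹ • (W s - wat w0 W s)‖
        ≤ σ⁻¹*‖W s - wat w0 W s‖ + L12*‖dh s - D s‖ + L11*‖W s - wat w0 W s‖
          + (n:ℝ)*(L12*‖D s - D s.tail‖) + L11*‖wat w0 W s - wat w0 W s.tail‖ := by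
      rw [hdc]
      have t1 := norm_add_le (-(σ⁻¹ • (W s - wat w0 W s)) + (Gw (W s) (dh s) - Gw (W s) (D s))
        + (Gw (W s) (D s) - Gw (wat w0 W s) (D s)) + (-(cδ s))) (-(cw s))
      have t2 := norm_add_le (-(σ⁻¹ • (W s - wat w0 W s)) + (Gw (W s) (dh s) - Gw (W s) (D s))
        + (Gw (W s) (D s) - Gw (wat w0 W s) (D s))) (-(cδ s))
      have t3 := norm_add_le (-(σ⁻¹ • (W s - wat w0 W s)) + (Gw (W s) (dh s) - Gw (W s) (D s)))
        (Gw (W s) (D s) - Gw (wat w0 W s) (D s))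
      have t4 := norm_add_le (-(σ⁻¹ • (W s - wat w0 W s))) (Gw (W s) (dh s) - Gw (W s) (D s))
      linarith
    have hsq := ssi_sq5 (norm_nonneg _) htri (by positivity) (by positivity) (by positivity)
      (by positivity) (by positivity)
    have e1 : aw s = ‖W s - wat w0 W s‖^2 := by rw [haw]
    have e2 : adh s = ‖dh s - D s‖^2 := by rw [hadh]
    have e3 : ad s = ‖D s - D s.tail‖^2 := by rw [had]
    have e4 : pw s = ‖wat w0 W s - wat w0 W s.tail‖^2 := by rw [hpw]
    rw [e1, e2, e3, e4]
    nlinarith [hsq]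
  have hcxK : ∀ s, cx s ≤ σ⁻¹/2 * fw s + ((n:ℝ)*κ/τ)/2 * ad s + (κ/σ)/2 * pw s := by
    intro s
    have h1 : cx s ≤ ‖cv s‖ * ‖wat w0 W s - wstar‖ := by
      rw [hcx]
      simp only []
      have a1 := abs_real_inner_le_norm (cv s) (wat w0 W s - wstar)
      have b1 := le_abs_self (⟪cv s, wat w0 W s - wstar⟫:ℝ)
      linarith
    have h4 : ‖cv s‖ ≤ (n:ℝ)*(L12*‖D s - D s.tail‖) + L11*‖wat w0 W s - wat w0 W s.tail‖ := by
      have h2 : ‖cv s‖ ≤ ‖cδ s‖ + ‖cw s‖ := by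
        have e : cv s = cδ s + cw s := by rw [hcv]
        rw [e]; exact norm_add_le _ _
      linarith [hcdn s, hcwn s]
    have h3 : ‖cv s‖^2 ≤ 3*((n:ℝ)*(L12*‖D s - D s.tail‖))^2
        + 3/2*(L11*‖wat w0 W s - wat w0 W s.tail‖)^2 :=
      ssi_sq2 (norm_nonneg _) h4 (by positivity) (by positivity)
    have h5 : ‖cv s‖ * ‖wat w0 W s - wstar‖
        ≤ σ/2 * ‖cv s‖^2 + σ⁻¹/2 * ‖wat w0 W s - wstar‖^2 := by
      have hy := ssi_young (c := 1) (X := σ) (Y := σ⁻¹) (‖cv s‖) (‖wat w0 W s - wstar‖)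
        zero_le_one hσ.le (by positivity)
        (by rw [mul_inv_cancel₀ (ne_of_gt hσ)]; norm_num) (norm_nonneg _) (norm_nonneg _)
      linarith
    have c0 : 3*κ^2 ≤ κ := by nlinarith
    have c1 : σ/2*(3*((n:ℝ)*L12)^2) ≤ ((n:ℝ)*κ/τ)/2 := by
      rw [le_div_iff₀ (by norm_num : (0:ℝ) < 2), div_mul_eq_mul_div, le_div_iff₀ hτ]
      nlinarith [mul_le_mul_of_nonneg_left hκsq hn0.le, mul_le_mul_of_nonneg_left c0 hn0.le]
    have c2 : σ/2*(3/2*L11^2) ≤ (κ/σ)/2 := by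
      rw [le_div_iff₀ (by norm_num : (0:ℝ) < 2), div_mul_eq_mul_div, le_div_iff₀ hσ]
      nlinarith [mul_le_mul hκL11 hκL11 (by positivity) hκpos.le]
    have e1 : ad s = ‖D s - D s.tail‖^2 := by rw [had]
    have e3 : pw s = ‖wat w0 W s - wat w0 W s.tail‖^2 := by rw [hpw]
    have e4 : fw s = ‖wat w0 W s - wstar‖^2 := by rw [hfw]; simp only []; rw [norm_sub_rev]
    have k1 : cx s ≤ σ/2 * ‖cv s‖^2 + σ⁻¹/2 * ‖wat w0 W s - wstar‖^2 := le_trans h1 h5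
    have k2 : σ/2 * ‖cv s‖^2 ≤ σ/2 * (3*((n:ℝ)*(L12*‖D s - D s.tail‖))^2
        + 3/2*(L11*‖wat w0 W s - wat w0 W s.tail‖)^2) :=
      mul_le_mul_of_nonneg_left h3 (by positivity)
    have k3 : σ/2 * (3*((n:ℝ)*(L12*‖D s - D s.tail‖))^2
          + 3/2*(L11*‖wat w0 W s - wat w0 W s.tail‖)^2)
        = (σ/2*(3*((n:ℝ)*L12)^2))*‖D s - D s.tail‖^2
          + (σ/2*(3/2*L11^2))*‖wat w0 W s - wat w0 W s.tail‖^2 := by ring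
    have k4 := mul_le_mul_of_nonneg_right c1 (sq_nonneg (‖D s - D s.tail‖))
    have k5 := mul_le_mul_of_nonneg_right c2 (sq_nonneg (‖wat w0 W s - wat w0 W s.tail‖))
    rw [e1, e3, e4]
    rw [k3] at k2
    linarith [k1, k2, k4, k5]
  -- step 7 : inner product decomposition of the drift term
  have hebInner : ∀ s, (⟪eb s, W s - wstar⟫ : ℝ)
      = (n:ℝ)⁻¹ * ∑ i, cx (i :: s) - cx s - ⟪cv s, W s - wat w0 W s⟫ := by
    intro s
    rw [hEb s, inner_sub_left, real_inner_smul_left, sum_inner]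
    have h1 : ∀ i : Fin n, (⟪cv (i :: s), W s - wstar⟫:ℝ) = cx (i :: s) := by
      intro i
      rw [hcx]
      simp only [hwat_cons]
    rw [Finset.sum_congr rfl fun i _ => h1 i]
    have h2 : (⟪cv s, W s - wstar⟫:ℝ) = cx s + ⟪cv s, W s - wat w0 W s⟫ := by
      rw [hcx]
      simp only []
      rw [show W s - wstar = (wat w0 W s - wstar) + (W s - wat w0 W s) from by abel,
        inner_add_right]
    rw [h2]
    ring
  -- step 8 : the per-history master inequality
  have hPs : ∀ s,
      σ⁻¹/2 * ((n:ℝ)⁻¹ * ∑ i, fw (i :: s)) + ((n:ℝ)*τ⁻¹)/2 * ((n:ℝ)⁻¹ * ∑ i, fd (i :: s))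
        + σ⁻¹/2 * aw s + τ⁻¹/2 * adh s
      ≤ σ⁻¹/2 * fw s + ((n:ℝ)*τ⁻¹)/2 * fd s
        + ((n:ℝ)⁻¹ * ∑ i, cx (i :: s) - cx s) + bad s := by
    intro s
    have hM := hMVIs s
    have hI := hebInner s
    have hX := hcross s
    have hR := mul_le_mul_of_nonneg_left (hF8 s) (by positivity : (0:ℝ) ≤ ρ/2)
    have hq1 : (n:ℝ)⁻¹ * ∑ i, fw (i :: s) = ‖W s - wstar‖^2 := by
      rw [Finset.sum_congr rfl fun i _ => hF4 i s, Finset.sum_const, Finset.card_univ,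
        Fintype.card_fin, nsmul_eq_mul]
      field_simp
    have hq2 : ((n:ℝ)*τ⁻¹)/2 * ((n:ℝ)⁻¹ * ∑ i, fd (i :: s))
        = ((n:ℝ)*τ⁻¹)/2 * fd s + τ⁻¹/2 * (‖dh s - δstar‖^2 - fd s) := by
      rw [hF2 s]
      field_simp
      ring
    rw [hq1, hq2]
    simp only [hbad]
    linarith [hM, hI, hX, hR]
  -- step 9 : averaged inequality per level
  have hsuccEx : ∀ (F : List (Fin n) → ℝ) k, ssiEx n (k+1) F
      = ssiEx n k (fun s => (n:ℝ)⁻¹ * ∑ i, F (i :: s)) := fun F k => ssiEx_succ hn k F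
  have hstepk : ∀ k : ℕ,
      σ⁻¹/2 * ssiEx n (k+1) fw + ((n:ℝ)*τ⁻¹)/2 * ssiEx n (k+1) fd
        + σ⁻¹/2 * ssiEx n k aw + τ⁻¹/2 * ssiEx n k adh
      ≤ σ⁻¹/2 * ssiEx n k fw + ((n:ℝ)*τ⁻¹)/2 * ssiEx n k fd
        + (ssiEx n (k+1) cx - ssiEx n k cx) + ssiEx n k bad := by
    intro k
    have h0 := ssiEx_le (n := n) (k := k) (fun s => hPs s)
    simp only [ssiEx_add, ssiEx_sub, ssiEx_mul] at h0
    rw [hsuccEx fw k, hsuccEx fd k, hsuccEx cx k]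
    simp only [ssiEx_mul]
    linarith [h0]
  have hbadk : ∀ k : ℕ, ssiEx n k bad
      = ((n:ℝ)*κ/τ)/2 * ssiEx n k ad + (κ/σ) * ssiEx n k aw + (κ/σ)/2 * ssiEx n k pw
        + ρ/2*(3*(σ⁻¹)^2* ssiEx n k aw + 6*(L12^2* ssiEx n k adh + L11^2* ssiEx n k aw
            + (n:ℝ)^2*L12^2* ssiEx n k ad + L11^2* ssiEx n k pw) + (τ⁻¹)^2* ssiEx n k adh) := by
    intro k
    conv_lhs => rw [hbad]
    simp only [ssiEx_add, ssiEx_mul]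
  have hADsucc : ∀ k : ℕ, ssiEx n (k+1) ad = (n:ℝ)⁻¹ * ssiEx n k adh := by
    intro k
    calc ssiEx n (k+1) ad = ssiEx n k (fun s => (n:ℝ)⁻¹ * ∑ i, ad (i :: s)) := hsuccEx ad k
      _ = ssiEx n k (fun s => (n:ℝ)⁻¹ * adh s) := ssiEx_congr (fun s => by rw [hF3 s])
      _ = (n:ℝ)⁻¹ * ssiEx n k adh := ssiEx_mul _ _
  have hPWsucc : ∀ k : ℕ, ssiEx n (k+1) pw = ssiEx n k aw := by
    intro k
    calc ssiEx n (k+1) pw = ssiEx n k (fun s => (n:ℝ)⁻¹ * ∑ i, pw (i :: s)) := hsuccEx pw k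
      _ = ssiEx n k (fun s => (n:ℝ)⁻¹ * ((n:ℝ) * aw s)) := ssiEx_congr (fun s => by
            rw [Finset.sum_congr rfl fun i _ => hF5 i s, Finset.sum_const, Finset.card_univ,
              Fintype.card_fin, nsmul_eq_mul])
      _ = ssiEx n k (fun s => aw s) := ssiEx_congr (fun s => by
            rw [← mul_assoc, inv_mul_cancel₀ hnne, one_mul])
      _ = ssiEx n k aw := rfl
  have hAD0 : ssiEx n 0 ad = 0 := by rw [ssiEx_zero, had]; simp
  have hPW0 : ssiEx n 0 pw = 0 := by rw [ssiEx_zero, hpw]; simp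
  have hCX0 : ssiEx n 0 cx = 0 := by rw [ssiEx_zero, hcx]; simp [hcv0]
  have hFW0 : ssiEx n 0 fw = ‖wstar - w0‖^2 := by rw [ssiEx_zero, hfw]; rfl
  have hFD0 : ssiEx n 0 fd = ‖δstar - D []‖^2 := by rw [ssiEx_zero, hfd]
  have hAWnn : ∀ k : ℕ, 0 ≤ ssiEx n k aw :=
    fun k => ssiEx_nonneg (fun s => by simp only [haw]; positivity)
  have hADHnn : ∀ k : ℕ, 0 ≤ ssiEx n k adh :=
    fun k => ssiEx_nonneg (fun s => by simp only [hadh]; positivity)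
  have hADnn : ∀ k : ℕ, 0 ≤ ssiEx n k ad :=
    fun k => ssiEx_nonneg (fun s => by simp only [had]; positivity)
  have hPWnn : ∀ k : ℕ, 0 ≤ ssiEx n k pw :=
    fun k => ssiEx_nonneg (fun s => by simp only [hpw]; positivity)
  have hFDnn : ∀ k : ℕ, 0 ≤ ssiEx n k fd :=
    fun k => ssiEx_nonneg (fun s => by simp only [hfd]; positivity)
  have hCXK : ssiEx n K cx ≤ σ⁻¹/2 * ssiEx n K fw + ((n:ℝ)*κ/τ)/2 * ssiEx n K ad
      + (κ/σ)/2 * ssiEx n K pw := by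
    have h0 := ssiEx_le (n := n) (k := K) (fun s => hcxK s)
    simp only [ssiEx_add, ssiEx_mul] at h0
    linarith
  -- step 10 : telescoping
  set G : ℕ → ℝ := fun k => σ⁻¹/2 * ssiEx n k fw + ((n:ℝ)*τ⁻¹)/2 * ssiEx n k fd
    - ssiEx n k cx with hG
  have hstepk' : ∀ k : ℕ, G (k+1) - G k
      ≤ ssiEx n k bad - σ⁻¹/2 * ssiEx n k aw - τ⁻¹/2 * ssiEx n k adh := by
    intro k
    have h0 := hstepk k
    simp only [hG]
    linarith
  have hGsum : G K - G 0
      ≤ ∑ k ∈ Finset.range K,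
          (ssiEx n k bad - σ⁻¹/2 * ssiEx n k aw - τ⁻¹/2 * ssiEx n k adh) := by
    rw [← Finset.sum_range_sub (fun k => G k) K]
    exact Finset.sum_le_sum fun k _ => hstepk' k
  have hsplit : ∑ k ∈ Finset.range K,
        (ssiEx n k bad - σ⁻¹/2 * ssiEx n k aw - τ⁻¹/2 * ssiEx n k adh)
      = (∑ k ∈ Finset.range K, ssiEx n k bad)
        - σ⁻¹/2 * (∑ k ∈ Finset.range K, ssiEx n k aw)
        - τ⁻¹/2 * (∑ k ∈ Finset.range K, ssiEx n k adh) := by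
    rw [Finset.sum_sub_distrib, Finset.sum_sub_distrib, Finset.mul_sum, Finset.mul_sum]
  -- step 11 : shifted sums
  obtain ⟨K', rfl⟩ : ∃ K'', K = K'' + 1 := ⟨K - 1, (Nat.succ_pred_eq_of_pos hK).symm⟩
  have hADshift : (∑ k ∈ Finset.range (K'+1), ssiEx n k ad) + ssiEx n (K'+1) ad
      = (n:ℝ)⁻¹ * ∑ k ∈ Finset.range (K'+1), ssiEx n k adh := by
    rw [Finset.sum_range_succ' (fun k => ssiEx n k ad) K', hAD0, add_zero,
      ← Finset.sum_range_succ (fun k => ssiEx n (k+1) ad) K']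
    rw [Finset.sum_congr rfl fun k _ => hADsucc k, ← Finset.mul_sum]
  have hPWshift : (∑ k ∈ Finset.range (K'+1), ssiEx n k pw) + ssiEx n (K'+1) pw
      = ∑ k ∈ Finset.range (K'+1), ssiEx n k aw := by
    rw [Finset.sum_range_succ' (fun k => ssiEx n k pw) K', hPW0, add_zero,
      ← Finset.sum_range_succ (fun k => ssiEx n (k+1) pw) K']
    exact Finset.sum_congr rfl fun k _ => hPWsucc k
  -- step 12 : rewrite the goal in terms of ssiEx
  have hgw : ∀ k : ℕ, ((n:ℝ)^k)⁻¹ * ∑ s : Fin k → Fin n,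
        ‖W (List.ofFn s) - wat w0 W (List.ofFn s)‖^2 = ssiEx n k aw := by
    intro k
    simp only [ssiEx, haw]
  have hgd2 : ∀ k : ℕ, ((n:ℝ)^(k+1))⁻¹ * ∑ s : Fin (k+1) → Fin n,
        ‖D (List.ofFn s) - D (List.ofFn s).tail‖^2 = ssiEx n (k+1) ad := by
    intro k
    simp only [ssiEx, had]
  rw [Finset.sum_congr rfl fun k _ => hgw k, Finset.sum_congr rfl fun k _ => hgd2 k]
  have hdsum : ∑ k ∈ Finset.range (K'+1), ssiEx n (k+1) ad
      = (n:ℝ)⁻¹ * ∑ k ∈ Finset.range (K'+1), ssiEx n k adh := by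
    rw [Finset.sum_congr rfl fun k _ => hADsucc k, ← Finset.mul_sum]
  rw [hdsum]
  -- step 13 : final arithmetic
  set SAW : ℝ := ∑ k ∈ Finset.range (K'+1), ssiEx n k aw with hSAW
  set SADH : ℝ := ∑ k ∈ Finset.range (K'+1), ssiEx n k adh with hSADH
  set SAD : ℝ := ∑ k ∈ Finset.range (K'+1), ssiEx n k ad with hSAD
  set SPW : ℝ := ∑ k ∈ Finset.range (K'+1), ssiEx n k pw with hSPW
  have hSAWnn : 0 ≤ SAW := Finset.sum_nonneg fun k _ => hAWnn k
  have hSADHnn : 0 ≤ SADH := Finset.sum_nonneg fun k _ => hADHnn k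
  have hbadsum : ∑ k ∈ Finset.range (K'+1), ssiEx n k bad
      = ((n:ℝ)*κ/τ)/2 * SAD + (κ/σ) * SAW + (κ/σ)/2 * SPW
        + ρ/2*(3*(σ⁻¹)^2* SAW + 6*(L12^2* SADH + L11^2* SAW
            + (n:ℝ)^2*L12^2* SAD + L11^2* SPW) + (τ⁻¹)^2* SADH) := by
    rw [Finset.sum_congr rfl fun k _ => hbadk k]
    simp only [Finset.sum_add_distrib, ← Finset.mul_sum, hSAW, hSADH, hSAD, hSPW]
  have hmain : σ⁻¹/2 * SAW + τ⁻¹/2 * SADH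
      ≤ σ⁻¹/2 * ‖wstar - w0‖^2 + ((n:ℝ)*τ⁻¹)/2 * ‖δstar - D []‖^2
        + ((n:ℝ)*κ/τ)/2 * (SAD + ssiEx n (K'+1) ad)
        + (κ/σ)/2 * (SPW + ssiEx n (K'+1) pw) + (κ/σ) * SAW
        + ρ/2*(3*(σ⁻¹)^2* SAW + 6*(L12^2* SADH + L11^2* SAW
            + (n:ℝ)^2*L12^2* SAD + L11^2* SPW) + (τ⁻¹)^2* SADH) := by
    have h1 := hGsum
    rw [hsplit, hbadsum] at h1
    have hG0 : G 0 = σ⁻¹/2 * ‖wstar - w0‖^2 + ((n:ℝ)*τ⁻¹)/2 * ‖δstar - D []‖^2 := by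
      simp only [hG]
      rw [hFW0, hFD0, hCX0]
      ring
    have hGK : -(G (K'+1)) ≤ ((n:ℝ)*κ/τ)/2 * ssiEx n (K'+1) ad
        + (κ/σ)/2 * ssiEx n (K'+1) pw := by
      simp only [hG]
      have h2 := hCXK
      have h3 : 0 ≤ ((n:ℝ)*τ⁻¹)/2 * ssiEx n (K'+1) fd := by
        have := hFDnn (K'+1)
        positivity
      linarith
    linarith [h1, hGK]
  have hrest : ((n:ℝ)*κ/τ)/2 * (SAD + ssiEx n (K'+1) ad) = ((n:ℝ)*κ/τ)/2 * ((n:ℝ)⁻¹ * SADH) := by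
    rw [hADshift]
  have hrest2 : (κ/σ)/2 * (SPW + ssiEx n (K'+1) pw) = (κ/σ)/2 * SAW := by
    rw [hPWshift]
  have hSADle : SAD ≤ (n:ℝ)⁻¹ * SADH := by
    have := hADnn (K'+1)
    have h4 : SAD + ssiEx n (K'+1) ad = (n:ℝ)⁻¹ * SADH := hADshift
    linarith
  have hSPWle : SPW ≤ SAW := by
    have := hPWnn (K'+1)
    have h4 : SPW + ssiEx n (K'+1) pw = SAW := hPWshift
    linarith
  rw [hrest, hrest2] at hmain
  -- coefficient identities
  have hcoefW : (1 - 3 * κ - 3 * ρ * (σ⁻¹ + 4 * L11 ^ 2 * σ)) / (2 * σ)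
      = σ⁻¹/2 - (κ/σ) - (κ/σ)/2 - ρ/2*(3*(σ⁻¹)^2 + 6*L11^2 + 6*L11^2) := by
    field_simp
    ring
  have hcoefD : (n:ℝ) * (1 - κ - ρ * (τ⁻¹ + 12 * (n:ℝ) * L12 ^ 2 * τ)) / (2 * τ) * (n:ℝ)⁻¹
      = τ⁻¹/2 - ((n:ℝ)*κ/τ)/2 * (n:ℝ)⁻¹ - ρ/2*((τ⁻¹)^2 + 12*(n:ℝ)*L12^2) := by
    field_simp
  have hrhs : (1 / (2 * σ)) * ‖wstar - w0‖ ^ 2 + ((n:ℝ) / (2 * τ)) * ‖δstar - D []‖ ^ 2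
      = σ⁻¹/2 * ‖wstar - w0‖^2 + ((n:ℝ)*τ⁻¹)/2 * ‖δstar - D []‖^2 := by
    field_simp
  rw [hrhs]
  have hfin1 : ((1 - 3 * κ - 3 * ρ * (σ⁻¹ + 4 * L11 ^ 2 * σ)) / (2 * σ)) * SAW
      ≤ (σ⁻¹/2 - (κ/σ) - (κ/σ)/2 - ρ/2*(3*(σ⁻¹)^2 + 6*L11^2 + 6*L11^2)) * SAW := by
    rw [hcoefW]
  have hcoefDle : (n:ℝ) * (1 - κ - ρ * (τ⁻¹ + 12 * (n:ℝ) * L12 ^ 2 * τ)) / (2 * τ) * (n:ℝ)⁻¹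
      ≤ τ⁻¹/2 - ((n:ℝ)*κ/τ)/2 * (n:ℝ)⁻¹ - ρ/2*((τ⁻¹)^2 + 6*L12^2 + 6*(n:ℝ)*L12^2) := by
    rw [hcoefD]
    have h6 : 0 ≤ L12^2 * ((n:ℝ) - 1) := mul_nonneg (sq_nonneg _) (by linarith)
    linarith [mul_nonneg hρ.le h6]
  have hfin2 : ((n:ℝ) * (1 - κ - ρ * (τ⁻¹ + 12 * (n:ℝ) * L12 ^ 2 * τ)) / (2 * τ)) * ((n:ℝ)⁻¹ * SADH)
      ≤ (τ⁻¹/2 - ((n:ℝ)*κ/τ)/2 * (n:ℝ)⁻¹ - ρ/2*((τ⁻¹)^2 + 6*L12^2 + 6*(n:ℝ)*L12^2)) * SADH := by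
    rw [← mul_assoc]
    exact mul_le_mul_of_nonneg_right hcoefDle hSADHnn
  -- combine everything
  have hz1 : ρ/2*(6*((n:ℝ)^2*L12^2* SAD)) ≤ ρ/2*(6*((n:ℝ)^2*L12^2* ((n:ℝ)⁻¹ * SADH))) := by
    have h7 : (n:ℝ)^2*L12^2* SAD ≤ (n:ℝ)^2*L12^2* ((n:ℝ)⁻¹ * SADH) :=
      mul_le_mul_of_nonneg_left hSADle (by positivity)
    have h8 : 6*((n:ℝ)^2*L12^2* SAD) ≤ 6*((n:ℝ)^2*L12^2* ((n:ℝ)⁻¹ * SADH)) := by linarith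
    exact mul_le_mul_of_nonneg_left h8 (by positivity)
  have hz2 : ρ/2*(6*(L11^2* SPW)) ≤ ρ/2*(6*(L11^2* SAW)) := by
    have h7 : L11^2* SPW ≤ L11^2* SAW := mul_le_mul_of_nonneg_left hSPWle (sq_nonneg _)
    have h8 : 6*(L11^2* SPW) ≤ 6*(L11^2* SAW) := by linarith
    exact mul_le_mul_of_nonneg_left h8 (by positivity)
  have he1 : ρ/2*(6*((n:ℝ)^2*L12^2*((n:ℝ)⁻¹*SADH))) = ρ/2*(6*((n:ℝ)*L12^2*SADH)) := by
    field_simp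
  linarith [hmain, hfin1, hfin2, hz1, hz2, he1]
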